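/- Let n ≥ 1, p ≥ 1, η ∈ ℝ with 1 + η > 0, let X_i ∈ ℝ^p with coordinate sum S_i = Σ_{j=1}^p X_{ij} for i = 1,…,n+1, and let Y_1,…,Y_n ∈ ℝ. For a provisional value y ∈ ℝ set Y_{n+1} = y and define μ_i(y) = −Y_i + S_i + η Σ_{j ∈ {1,…,n+1}, j ≠ i} (Y_j − S_j) for i = 1,…,n+1. Let a_i = Y_i + (S_{n+1} − S_i) for i = 1,…,n. Then (a) for each i ∈ {1,…,n}, μ_i(y) ≥ μ_{n+1}(y) if and only if y ≥ a_i; and (b) for every α ∈ (0,1) with (n+1)α not an integer and r := ⌊(n+1)α⌋ satisfying 1 ≤ r ≤ n, the conformal prediction region {y ∈ ℝ : #{i ∈ {1,…,n+1} : μ_i(y) ≥ μ_{n+1}(y)} > (n+1)α} equals the one-sided interval {y ∈ ℝ : y ≥ a_{(r)}}, where a_{(k)} denotes the k-th smallest value among a_1,…,a_n. -/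

import Mathlib

/-- Left-bounded companion of Theorem 3 (Theorem 4 of the paper, corrected):
for the scores `μ_i(y) = −Y_i + S_i + η Σ_{j ≠ i} (Y_j − S_j)` with
`1 + η > 0`, (a) `μ_i(y) ≥ μ_{n+1}(y)` iff `y ≥ a_i`, and (b) the conformal
prediction region is the one-sided interval `[a_{(r)}, ∞)`, where
`a_i = Y_i + (S_{n+1} − S_i)` and `r = ⌊(n+1)α⌋`. -/
theorem stmt_12
    (n p : ℕ) (hn : 1 ≤ n) (hp : 1 ≤ p)
    (η : ℝ) (hη : 0 < 1 + η)
    (X : Fin (n + 1) → Fin p → ℝ) (Y : Fin n → ℝ)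
    (S : Fin (n + 1) → ℝ) (hS : ∀ i, S i = ∑ j, X i j)
    (μ : ℝ → Fin (n + 1) → ℝ)
    (hμ : ∀ (y : ℝ) (i : Fin (n + 1)),
      μ y i = -(Fin.snoc Y y : Fin (n + 1) → ℝ) i
        + S i + η * ∑ j ∈ Finset.univ.erase i,
            ((Fin.snoc Y y : Fin (n + 1) → ℝ) j - S j))
    (a : Fin n → ℝ)
    (ha : ∀ i : Fin n, a i = Y i + (S (Fin.last n) - S i.castSucc)) :
    (∀ (y : ℝ) (i : Fin n),
      μ y (Fin.last n) ≤ μ y i.castSucc ↔ a i ≤ y) ∧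
    (∀ (α : ℝ) (_ : α ∈ Set.Ioo (0 : ℝ) 1)
      (_ : ∀ k : ℤ, ((n : ℝ) + 1) * α ≠ (k : ℝ))
      (r : ℕ) (_ : (r : ℤ) = ⌊((n : ℝ) + 1) * α⌋) (_ : 1 ≤ r) (_ : r ≤ n),
      {y : ℝ | ((n : ℝ) + 1) * α <
          ((Finset.univ.filter
            (fun i : Fin (n + 1) => μ y (Fin.last n) ≤ μ y i)).card : ℝ)}
        = Set.Ici ((a ∘ Tuple.sort a) ⟨r - 1, by omega⟩)) := by
  have key : ∀ (y : ℝ) (i : Fin n),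
      μ y (Fin.last n) ≤ μ y i.castSucc ↔ a i ≤ y := by
    intro y i
    have h1 := hμ y (Fin.last n)
    have h2 := hμ y i.castSucc
    rw [Finset.sum_erase_eq_sub (Finset.mem_univ _)] at h1 h2
    rw [Fin.snoc_last] at h1
    rw [Fin.snoc_castSucc] at h2
    have key2 : μ y i.castSucc - μ y (Fin.last n) = (1 + η) * (y - a i) := by
      rw [h1, h2, ha]; ring
    constructor
    · intro h; nlinarith [key2]
    · intro h; nlinarith [key2]
  refine ⟨key, ?_⟩
  intro α hα hni r hr hr1 hrn
  set σ := Tuple.sort a with hσ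
  have hmono : Monotone (a ∘ σ) := Tuple.monotone_sort a
  set k : Fin n := ⟨r - 1, by omega⟩ with hk
  ext y
  simp only [Set.mem_setOf_eq, Set.mem_Ici]
  have hcard : (Finset.univ.filter (fun i : Fin (n + 1) => μ y (Fin.last n) ≤ μ y i)).card
      = (Finset.univ.filter (fun i : Fin n => a i ≤ y)).card + 1 := by
    rw [Finset.card_filter, Finset.card_filter, Fin.sum_univ_castSucc]
    simp [key y]
  rw [hcard]
  set m := (Finset.univ.filter (fun i : Fin n => a i ≤ y)).card with hm
  have hiff : ((n : ℝ) + 1) * α < ((m + 1 : ℕ) : ℝ) ↔ r ≤ m := by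
    rw [show (((m + 1 : ℕ)) : ℝ) = (((m : ℤ) + 1 : ℤ) : ℝ) by push_cast; ring,
      ← Int.floor_lt, ← hr]
    constructor <;> intro h <;> exact_mod_cast by omega
  rw [hiff]
  constructor
  · intro hrm
    by_contra hy
    push_neg at hy
    simp only [Function.comp_apply] at hy
    have hsub : m ≤ (Finset.Iio k).card := by
      apply Finset.card_le_card_of_injOn (fun i => σ.symm i)
      · intro i hi
        simp only [Finset.mem_coe, Finset.mem_filter, Finset.mem_univ, true_and] at hi
        simp only [Finset.mem_coe, Finset.mem_Iio]
        by_contra hlt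
        push_neg at hlt
        have := hmono hlt
        simp only [Function.comp_apply, Equiv.apply_symm_apply] at this
        linarith
      · exact fun x _ y _ h => σ.symm.injective h
    rw [Fin.card_Iio] at hsub
    simp only [hk] at hsub
    omega
  · intro hy
    simp only [Function.comp_apply] at hy
    have hsub : (Finset.Iic k).card ≤ m := by
      apply Finset.card_le_card_of_injOn (fun i => σ i)
      · intro i hi
        simp only [Finset.mem_coe, Finset.mem_Iic] at hi
        simp only [Finset.mem_coe, Finset.mem_filter, Finset.mem_univ, true_and]
        have := hmono hi
        simp only [Function.comp_apply] at this
        linarith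
      · exact fun x _ y _ h => σ.injective h
    rw [Fin.card_Iic] at hsub
    simp only [hk] at hsub
    omega
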